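/- Let ψ : (0,∞) → (0,∞) be regularly varying at 0 with index 1 and set L(u) = ∫_u^∞ dr/ψ(r) (assumed finite for u > 0). Then u/(ψ(u)·L(u)) → 0 as u → 0⁺. -/

import Mathlib

open MeasureTheory Set Filter

theorem stmt14 (ψ : ℝ → ℝ) (hcont : ContinuousOn ψ (Ioi 0))
    (hpos : ∀ s : ℝ, 0 < s → 0 < ψ s)
    (hrv : ∀ lam : ℝ, 0 < lam →
      Tendsto (fun x : ℝ => ψ (lam * x) / ψ x) (nhdsWithin 0 (Ioi 0)) (nhds lam))
    (hint : ∀ u : ℝ, 0 < u → IntegrableOn (fun r : ℝ => (ψ r)⁻¹) (Ioi u)) :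
    Tendsto (fun u : ℝ => u / (ψ u * ∫ r in Ioi u, (ψ r)⁻¹))
      (nhdsWithin 0 (Ioi 0)) (nhds 0) := by
  set L : ℝ → ℝ := fun u => ∫ r in Ioi u, (ψ r)⁻¹ with hLdef
  have key : Tendsto (fun u : ℝ => ψ u * L u / u) (nhdsWithin 0 (Ioi 0)) atTop := by
    rw [tendsto_atTop]
    intro M
    by_contra hM
    rw [not_eventually] at hM
    have hfreq : ∃ᶠ u in nhdsWithin 0 (Ioi 0), ¬ M ≤ ψ u * L u / u ∧ 0 < u :=
      hM.and_eventually (eventually_mem_nhdsWithin)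
    obtain ⟨v, hv, hvp⟩ := Filter.exists_seq_forall_of_frequently hfreq
    have hv0 : ∀ n, 0 < v n := fun n => (hvp n).2
    set F : ℕ → ℝ → ℝ := fun n t => ψ (v n) * (ψ (v n * t))⁻¹ with hFdef
    -- integrability of F n on Ioi 1
    have hIntInner : ∀ n, IntegrableOn (fun t => (ψ (v n * t))⁻¹) (Ioi 1) := by
      intro n
      rw [integrableOn_Ioi_comp_mul_left_iff (fun r => (ψ r)⁻¹) 1 (hv0 n), mul_one]
      exact hint _ (hv0 n)
    have hIntF : ∀ n, IntegrableOn (F n) (Ioi 1) := fun n => (hIntInner n).const_mul _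
    -- value of the integral
    have hval : ∀ n, ∫ t in Ioi 1, F n t = ψ (v n) * L (v n) / v n := by
      intro n
      rw [hFdef]
      simp only
      rw [integral_const_mul]
      rw [integral_comp_mul_left_Ioi (fun r => (ψ r)⁻¹) 1 (hv0 n), mul_one]
      rw [smul_eq_mul, hLdef]
      field_simp
    -- nonnegativity
    have hFnn : ∀ n, 0 ≤ᵐ[volume.restrict (Ioi 1)] F n := by
      intro n
      filter_upwards [ae_restrict_mem measurableSet_Ioi] with t ht
      have h1 : 0 < v n * t := mul_pos (hv0 n) (lt_trans one_pos ht)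
      exact mul_nonneg (hpos _ (hv0 n)).le (inv_pos.mpr (hpos _ h1)).le
    -- lintegral bound
    have hlin : ∀ n, ∫⁻ t in Ioi 1, ENNReal.ofReal (F n t) ≤ ENNReal.ofReal M := by
      intro n
      rw [← ofReal_integral_eq_lintegral_ofReal (hIntF n) (hFnn n), hval n]
      exact ENNReal.ofReal_le_ofReal (le_of_not_ge (hvp n).1)
    -- measurability
    have hmeas : ∀ n, AEMeasurable (fun t => ENNReal.ofReal (F n t))
        (volume.restrict (Ioi 1)) := by
      intro n
      have hc : ContinuousOn (F n) (Ioi 1) := by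
        have h1 : ContinuousOn (fun t : ℝ => ψ (v n * t)) (Ioi 1) := by
          apply hcont.comp (continuousOn_const.mul continuousOn_id)
          intro t ht
          exact mem_Ioi.mpr (mul_pos (hv0 n) (lt_trans one_pos (mem_Ioi.mp ht)))
        exact continuousOn_const.mul (h1.inv₀ (fun t ht =>
          (hpos _ (mul_pos (hv0 n) (lt_trans one_pos (mem_Ioi.mp ht)))).ne'))
      exact ENNReal.measurable_ofReal.comp_aemeasurable
        (hc.aemeasurable measurableSet_Ioi)
    -- Fatou
    have fatou := lintegral_liminf_le' (u := atTop) hmeas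
    -- pointwise liminf
    have hpt : ∀ᵐ t ∂(volume : Measure ℝ),
        t ∈ Ioi 1 → Filter.liminf (fun n => ENNReal.ofReal (F n t)) atTop
          = ENNReal.ofReal t⁻¹ := by
      refine Filter.Eventually.of_forall fun t ht => ?_
      have ht0 : (0:ℝ) < t := lt_trans one_pos ht
      have h1 : Tendsto (fun n => ψ (t * v n) / ψ (v n)) atTop (nhds t) :=
        (hrv t ht0).comp hv
      have h2 : Tendsto (fun n => (ψ (t * v n) / ψ (v n))⁻¹) atTop (nhds t⁻¹) :=
        h1.inv₀ ht0.ne'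
      have h3 : Tendsto (fun n => F n t) atTop (nhds t⁻¹) := by
        convert h2 using 2 with n
        rw [hFdef]
        simp only
        rw [inv_div, mul_comm (v n) t, div_eq_mul_inv]
      exact ((ENNReal.continuous_ofReal.tendsto _).comp h3).liminf_eq
    have hEq : ∫⁻ t in Ioi 1, Filter.liminf (fun n => ENNReal.ofReal (F n t)) atTop
        = ∫⁻ t in Ioi 1, ENNReal.ofReal t⁻¹ := by
      exact setLIntegral_congr_fun_ae measurableSet_Ioi hpt
    have hbound : ∫⁻ t in Ioi 1, ENNReal.ofReal t⁻¹ ≤ ENNReal.ofReal M := by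
      rw [← hEq]
      refine fatou.trans ?_
      refine le_trans (Filter.liminf_le_liminf (Filter.Eventually.of_forall hlin)) ?_
      simp [Filter.liminf_const]
    -- contradiction with non-integrability of 1/x on Ioi 1
    have hIntInv : IntegrableOn (fun t : ℝ => t⁻¹) (Ioi 1) := by
      constructor
      · exact measurable_inv.aestronglyMeasurable
      · rw [hasFiniteIntegral_iff_ofReal ?_]
        · exact lt_of_le_of_lt hbound ENNReal.ofReal_lt_top
        · filter_upwards [ae_restrict_mem measurableSet_Ioi] with t ht
          exact (inv_pos.mpr (lt_trans one_pos ht)).le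
    exact not_IntegrableOn_Ioi_inv hIntInv
  have := key.inv_tendsto_atTop
  refine this.congr' ?_
  filter_upwards [eventually_mem_nhdsWithin] with u hu
  simp [Pi.inv_apply, inv_div]
  rfl
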